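/- Let W be a vector space over C, let a(x), b(x) ∈ Hom(W, W((x))) be fields (each w ∈ W maps to a Laurent series in W((x))), let g(x) ∈ xC[[x]] with g'(0) ≠ 0, and let k be a nonnegative integer. Then (g(x₁)−g(x₂))^k a(x₁)b(x₂) ∈ Hom(W, W((x₁,x₂))) if and only if (x₁−x₂)^k a(x₁)b(x₂) ∈ Hom(W, W((x₁,x₂))). Likewise (g(x₁)−g(x₂))^k a(x₁)b(x₂) = (g(x₁)−g(x₂))^k b(x₂)a(x₁) if and only if (x₁−x₂)^k a(x₁)b(x₂) = (x₁−x₂)^k b(x₂)a(x₁). -/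

import Mathlib

open scoped Classical
noncomputable section


/-! ### Substitution machinery for (multivariable) formal power series -/

variable {R : Type*} [CommRing R] {σ : Type*}

/-- Build a multivariate power series from its coefficient function. -/
def mvmk (f : (σ →₀ ℕ) → R) : MvPowerSeries σ R := f

/-- Total degree of a monomial exponent. -/
def wt (d : σ →₀ ℕ) : ℕ := d.sum fun _ n => n

/-- Substitution `f(u)` of a multivariate series `u` with zero constant term into a
one-variable power series `f`. -/
def pcompMv (f : PowerSeries R) (u : MvPowerSeries σ R) : MvPowerSeries σ R :=
  mvmk fun d => MvPowerSeries.coeff (R := R) d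
    (∑ k ∈ Finset.range (wt d + 1), MvPowerSeries.C (σ := σ) (R := R) (PowerSeries.coeff (R := R) k f) * u ^ k)

/-- Composition `f(g)` of one-variable power series, for `g` with zero constant term. -/
def pcomp (f g : PowerSeries R) : PowerSeries R :=
  PowerSeries.mk fun n => PowerSeries.coeff (R := R) n
    (∑ k ∈ Finset.range (n + 1), PowerSeries.C (R := R) (PowerSeries.coeff (R := R) k f) * g ^ k)

/-- Substitution `F(a,b)` of two series with zero constant term into a two-variable series. -/
def subst2 (F : MvPowerSeries (Fin 2) R) (a b : MvPowerSeries σ R) : MvPowerSeries σ R :=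
  mvmk fun d => MvPowerSeries.coeff (R := R) d
    (∑ p ∈ Finset.range (wt d + 1) ×ˢ Finset.range (wt d + 1),
      MvPowerSeries.C (σ := σ) (R := R)
          (MvPowerSeries.coeff (R := R) (Finsupp.single (0 : Fin 2) p.1 + Finsupp.single (1 : Fin 2) p.2) F)
        * a ^ p.1 * b ^ p.2)

/-- The one-variable power series `f` viewed in variable `i` of a two-variable ring. -/
def toMv (i : Fin 2) (f : PowerSeries R) : MvPowerSeries (Fin 2) R :=
  mvmk fun d => if d = Finsupp.single i (d i) then PowerSeries.coeff (R := R) (d i) f else 0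

/-- `F` is a one-dimensional formal group law: `F(x,0)=x`, `F(0,y)=y`,
`F(x,F(y,z))=F(F(x,y),z)`. -/
def IsFGL (F : MvPowerSeries (Fin 2) R) : Prop :=
  subst2 F (MvPowerSeries.X 0) 0 = (MvPowerSeries.X 0 : MvPowerSeries (Fin 2) R) ∧
  subst2 F 0 (MvPowerSeries.X 1) = (MvPowerSeries.X 1 : MvPowerSeries (Fin 2) R) ∧
  subst2 F (MvPowerSeries.X 0) (subst2 F (MvPowerSeries.X 1) (MvPowerSeries.X 2)) =
    subst2 F (subst2 F (MvPowerSeries.X 0) (MvPowerSeries.X 1))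
      (MvPowerSeries.X 2 : MvPowerSeries (Fin 3) R)

/-! ### Laurent series machinery -/

/-- The Laurent series variable `x`. -/
def xL : LaurentSeries ℂ := HahnSeries.single 1 1

theorem isPWO_Ici (a : ℤ) : (Set.Ici a).IsPWO := by
  have h : Set.Ici a = (fun n : ℕ => a + n) '' Set.univ := by
    ext n
    simp only [Set.mem_Ici, Set.mem_image, Set.mem_univ, true_and]
    constructor
    · intro h; exact ⟨(n - a).toNat, by omega⟩
    · rintro ⟨m, rfl⟩; omega
  rw [h]
  exact ((Set.isWF_univ_iff.2 ⟨wellFounded_lt⟩).isPWO).image_of_monotone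
    (fun x y hxy => by omega)

/-- Substitution `c(g)` of a Laurent series `g` of order one into a Laurent series `c`,
defined coefficientwise (using `zpow` in the field of Laurent series). -/
def lsubst (g c : LaurentSeries ℂ) : LaurentSeries ℂ :=
  { coeff := fun a => ∑ m ∈ Finset.Icc c.order a, c.coeff m * (g ^ m).coeff a
    isPWO_support' := (isPWO_Ici c.order).mono (by
      intro a ha
      simp only [Function.mem_support] at ha
      by_contra hc
      simp only [Set.mem_Ici, not_le] at hc
      rw [Finset.Icc_eq_empty (by omega), Finset.sum_empty] at ha
      exact ha rfl) }

/-- Formal derivative `d/dx` of a Laurent series. -/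
def lderiv (c : LaurentSeries ℂ) : LaurentSeries ℂ :=
  { coeff := fun a => (a + 1 : ℤ) • c.coeff (a + 1)
    isPWO_support' := (c.isPWO_support.image_of_monotone
        (f := fun m => m - 1) (fun x y h => by dsimp only; omega)).mono (by
      intro a ha
      simp only [Function.mem_support] at ha
      refine ⟨a + 1, ?_, by ring⟩
      intro h0
      exact ha (by rw [h0, smul_zero])) }

/-- `j`-th Hasse derivative `(1/j!) (d/dx)^j` of a Laurent series. -/
def hasse (j : ℕ) (c : LaurentSeries ℂ) : LaurentSeries ℂ := ((Nat.factorial j : ℂ))⁻¹ • lderiv^[j] c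

/-- Taylor-expansion substitution `φ(ψ, w)`: substitute `ψ` (whose constant term in the
`z`-variables is `x`) for `x` and `w` (zero constant term) for `z` in
`φ(x,z) = Σ c_n(x) zⁿ`, via `c_n(ψ) = Σ_j (hasse_j c_n)(x) (ψ - x)^j`. -/
def fullComp (φ : PowerSeries (LaurentSeries ℂ)) (ψ w : MvPowerSeries (Fin 2) (LaurentSeries ℂ)) :
    MvPowerSeries (Fin 2) (LaurentSeries ℂ) :=
  mvmk fun d => MvPowerSeries.coeff (R := (LaurentSeries ℂ)) d
    (∑ n ∈ Finset.range (wt d + 1), ∑ j ∈ Finset.range (wt d + 1),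
      MvPowerSeries.C (σ := (Fin 2)) (R := (LaurentSeries ℂ)) (hasse j (PowerSeries.coeff (R := (LaurentSeries ℂ)) n φ))
        * (ψ - MvPowerSeries.C (σ := (Fin 2)) (R := (LaurentSeries ℂ)) xL) ^ j * w ^ n)

/-- `φ(x,z) ∈ ℂ((x))[[z]]` is an associate of the formal group law `F`:
`φ(x,0) = x` and `φ(φ(x,z₁),z₂) = φ(x,F(z₁,z₂))`. -/
def IsAssoc (F : MvPowerSeries (Fin 2) ℂ) (φ : PowerSeries (LaurentSeries ℂ)) : Prop :=
  PowerSeries.constantCoeff (R := (LaurentSeries ℂ)) φ = xL ∧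
  fullComp φ (toMv 0 φ) (MvPowerSeries.X 1) =
    fullComp φ (MvPowerSeries.C (σ := (Fin 2)) (R := (LaurentSeries ℂ)) xL)
      (MvPowerSeries.map (σ := Fin 2) (HahnSeries.C : ℂ →+* LaurentSeries ℂ) F)

/-- Application of a one-variable series `c` (as a Laurent series) to
`ψ ∈ ℂ((x))[[z]]` whose constant term is the base point `w`, by Taylor expansion at `w`. -/
def acompAt (c w : LaurentSeries ℂ) (ψ : PowerSeries (LaurentSeries ℂ)) :
    PowerSeries (LaurentSeries ℂ) :=
  PowerSeries.mk fun n => PowerSeries.coeff (R := (LaurentSeries ℂ)) n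
    (∑ j ∈ Finset.range (n + 1),
      PowerSeries.C (R := (LaurentSeries ℂ)) (lsubst w (hasse j c)) *
        (ψ - PowerSeries.C (R := (LaurentSeries ℂ)) w) ^ j)




/-! ### Vertex-algebra machinery -/

/-- `F(x₀,x₂)` viewed in `ℂ((x₀))[[x₂]]`. -/
def FB (F : MvPowerSeries (Fin 2) ℂ) : PowerSeries (LaurentSeries ℂ) :=
  PowerSeries.mk fun j => HahnSeries.ofPowerSeries ℤ ℂ
    (PowerSeries.mk fun i =>
      MvPowerSeries.coeff (R := ℂ) (Finsupp.single (0 : Fin 2) i + Finsupp.single (1 : Fin 2) j) F)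

/-- Integer power `F(x₀,x₂)^k` computed in `ℂ((x₀))[[x₂]]` (negative powers via
`Ring.inverse`, which is the genuine inverse whenever `F(x,0)=x`). -/
def Fzp (F : MvPowerSeries (Fin 2) ℂ) (k : ℤ) : PowerSeries (LaurentSeries ℂ) :=
  if 0 ≤ k then (FB F) ^ k.toNat else (Ring.inverse (FB F)) ^ (-k).toNat

/-- The coefficient of `x₀^a x₂^c` in `F(x₀,x₂)^k ∈ ℂ((x₀))[[x₂]]`. -/
def FzC (F : MvPowerSeries (Fin 2) ℂ) (k : ℤ) (a c : ℤ) : ℂ :=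
  if 0 ≤ c then (PowerSeries.coeff (R := (LaurentSeries ℂ)) c.toNat (Fzp F k)).coeff a else 0

variable {V : Type*} [AddCommGroup V] [Module ℂ V]

/-- Vacuum property: `Y(𝟙,x)v = v`. -/
def Vacuum (Y : V → V → HahnSeries ℤ V) (vac : V) : Prop :=
  ∀ v, Y vac v = HahnSeries.single 0 v

/-- Creation property: `Y(v,x)𝟙 ∈ V[[x]]` with constant term `v`.
(Here `(Y u v).coeff a` is the coefficient of `x^a` in `Y(u,x)v`.) -/
def Creation (Y : V → V → HahnSeries ℤ V) (vac : V) : Prop :=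
  ∀ v, (∀ n : ℤ, n < 0 → (Y v vac).coeff n = 0) ∧ (Y v vac).coeff 0 = v

/-- Weak `F`-associativity: for all `u,v,w` there is `l` with
`F(x₀,x₂)^l Y(u,F(x₀,x₂))Y(v,x₂)w = F(x₀,x₂)^l Y(Y(u,x₀)v,x₂)w`,
expressed through coefficients of `x₀^a x₂^b`. -/
def WeakFAssoc (F : MvPowerSeries (Fin 2) ℂ) (Y : V → V → HahnSeries ℤ V) : Prop :=
  ∀ u v w : V, ∃ l : ℕ, ∀ a b : ℤ,
    (∑ᶠ mn : ℤ × ℤ, FzC F ((l : ℤ) + mn.1) a (b - mn.2) • (Y u ((Y v w).coeff mn.2)).coeff mn.1)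
    = ∑ᶠ mn : ℤ × ℤ, FzC F (l : ℤ) (a - mn.1) (b - mn.2) • (Y ((Y u v).coeff mn.1) w).coeff mn.2

/-- Weak commutativity: for all `u,v` there is `k` with
`(x₁-x₂)^k Y(u,x₁)Y(v,x₂) = (x₁-x₂)^k Y(v,x₂)Y(u,x₁)`, in coefficients of `x₁^a x₂^b`. -/
def WeakComm (Y : V → V → HahnSeries ℤ V) : Prop :=
  ∀ u v : V, ∃ k : ℕ, ∀ (w : V) (a b : ℤ),
    (∑ i ∈ Finset.range (k + 1),
      ((-1 : ℂ) ^ (k - i) * (k.choose i : ℂ)) •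
        (Y u ((Y v w).coeff (b - (k - i)))).coeff (a - i))
    = ∑ i ∈ Finset.range (k + 1),
      ((-1 : ℂ) ^ (k - i) * (k.choose i : ℂ)) •
        (Y v ((Y u w).coeff (a - i))).coeff (b - (k - i))

/-! ### Products of fields in two variables (for Lemma on `g(x₁)-g(x₂)`) -/

variable {W : Type*} [AddCommGroup W] [Module ℂ W]

/-- Coefficient of `x₁^m x₂^n` in `q(x₁,x₂)·a(x₁)b(x₂)w`. -/
def prodCoeff (q : MvPowerSeries (Fin 2) ℂ) (a b : W →ₗ[ℂ] HahnSeries ℤ W) (w : W)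
    (m n : ℤ) : W :=
  ∑ᶠ ij : ℕ × ℕ,
    MvPowerSeries.coeff (R := ℂ) (Finsupp.single (0 : Fin 2) ij.1 + Finsupp.single (1 : Fin 2) ij.2) q •
      (a ((b w).coeff (n - ij.2))).coeff (m - ij.1)

/-- Coefficient of `x₁^m x₂^n` in `q(x₁,x₂)·b(x₂)a(x₁)w`. -/
def prodCoeff' (q : MvPowerSeries (Fin 2) ℂ) (a b : W →ₗ[ℂ] HahnSeries ℤ W) (w : W)
    (m n : ℤ) : W :=
  ∑ᶠ ij : ℕ × ℕ,
    MvPowerSeries.coeff (R := ℂ) (Finsupp.single (0 : Fin 2) ij.1 + Finsupp.single (1 : Fin 2) ij.2) q •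
      (b ((a w).coeff (m - ij.1))).coeff (n - ij.2)

/-- Membership in `Hom(W, W((x₁,x₂)))` for the two-variable coefficient family. -/
def MemHom2 (q : MvPowerSeries (Fin 2) ℂ) (a b : W →ₗ[ℂ] HahnSeries ℤ W) : Prop :=
  ∀ w : W, ∃ N : ℕ, ∀ m n : ℤ, (m < -(N : ℤ) ∨ n < -(N : ℤ)) → prodCoeff q a b w m n = 0





/-! ### Auxiliary machinery for statement 14 -/

section Stmt14Aux

/-- Pack a pair of naturals into a `Fin 2 →₀ ℕ` exponent. -/
def epair (t : ℕ × ℕ) : Fin 2 →₀ ℕ := Finsupp.single 0 t.1 + Finsupp.single 1 t.2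

lemma epair_apply0 (t : ℕ × ℕ) : epair t 0 = t.1 := by simp [epair, Finsupp.single_apply]
lemma epair_apply1 (t : ℕ × ℕ) : epair t 1 = t.2 := by simp [epair, Finsupp.single_apply]
lemma fin2_eq (d : Fin 2 →₀ ℕ) : d = epair (d 0, d 1) := by
  ext x; fin_cases x <;> simp [epair, Finsupp.single_apply]
lemma epair_add (s t : ℕ × ℕ) : epair s + epair t = epair (s.1 + t.1, s.2 + t.2) := by
  ext x; fin_cases x <;> simp [epair, Finsupp.single_apply]

lemma coeff_mul_epair (f g : MvPowerSeries (Fin 2) ℂ) (t : ℕ × ℕ) :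
    MvPowerSeries.coeff (R := ℂ) (epair t) (f * g) =
      ∑ p ∈ Finset.HasAntidiagonal.antidiagonal t.1 ×ˢ Finset.HasAntidiagonal.antidiagonal t.2,
        MvPowerSeries.coeff (R := ℂ) (epair (p.1.1, p.2.1)) f *
          MvPowerSeries.coeff (R := ℂ) (epair (p.1.2, p.2.2)) g := by
  rw [MvPowerSeries.coeff_mul]
  refine Finset.sum_nbij' (i := fun q => ((q.1 0, q.2 0), (q.1 1, q.2 1)))
    (j := fun p => (epair (p.1.1, p.2.1), epair (p.1.2, p.2.2))) ?_ ?_ ?_ ?_ ?_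
  · rintro ⟨q1, q2⟩ hq
    rw [Finset.HasAntidiagonal.mem_antidiagonal] at hq
    simp only [Finset.mem_product, Finset.HasAntidiagonal.mem_antidiagonal]
    constructor
    · have := congrArg (fun d => d 0) hq
      simpa [epair_apply0] using this
    · have := congrArg (fun d => d 1) hq
      simpa [epair_apply1] using this
  · rintro ⟨⟨a1, a2⟩, ⟨b1, b2⟩⟩ hp
    simp only [Finset.mem_product, Finset.HasAntidiagonal.mem_antidiagonal] at hp
    rw [Finset.HasAntidiagonal.mem_antidiagonal]
    rw [epair_add]
    simp [hp.1, hp.2]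
  · rintro ⟨q1, q2⟩ _
    simp only [Prod.mk.injEq]
    exact ⟨(fin2_eq q1).symm, (fin2_eq q2).symm⟩
  · rintro ⟨⟨a1, a2⟩, ⟨b1, b2⟩⟩ _
    simp [epair_apply0, epair_apply1]
  · rintro ⟨q1, q2⟩ _
    rw [fin2_eq q1, fin2_eq q2]
    simp [epair_apply0, epair_apply1]

variable {W : Type*} [AddCommGroup W] [Module ℂ W]

lemma key_sum (B : ℕ) (f : ℕ × ℕ → ℕ × ℕ → W)
    (hf : ∀ p s : ℕ × ℕ, B ≤ p.1 + s.1 ∨ B ≤ p.2 + s.2 → f p s = 0) :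
    ∑ t ∈ Finset.range (2*B) ×ˢ Finset.range (2*B),
      ∑ u ∈ Finset.HasAntidiagonal.antidiagonal t.1 ×ˢ Finset.HasAntidiagonal.antidiagonal t.2,
        f (u.1.1, u.2.1) (u.1.2, u.2.2)
    = ∑ p ∈ Finset.range (2*B) ×ˢ Finset.range (2*B),
        ∑ s ∈ Finset.range (2*B) ×ˢ Finset.range (2*B), f p s := by
  classical
  have hmem : ∀ t : ℕ × ℕ, t ∈ Finset.range (2*B) ×ˢ Finset.range (2*B) ↔
      t.1 < 2*B ∧ t.2 < 2*B := by intro t; simp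
  set D := Finset.range (2*B) ×ˢ Finset.range (2*B) with hD
  have hR : ∑ x ∈ (D ×ˢ D).filter
        (fun x : (ℕ×ℕ)×(ℕ×ℕ) => x.1.1 + x.2.1 < 2*B ∧ x.1.2 + x.2.2 < 2*B), f x.1 x.2
      = ∑ x ∈ D ×ˢ D, f x.1 x.2 := by
    apply Finset.sum_filter_of_ne
    intro x _ hne
    constructor
    · by_contra h; exact hne (hf x.1 x.2 (Or.inl (by omega)))
    · by_contra h; exact hne (hf x.1 x.2 (Or.inr (by omega)))
  calc ∑ t ∈ D, ∑ u ∈ Finset.HasAntidiagonal.antidiagonal t.1 ×ˢ Finset.HasAntidiagonal.antidiagonal t.2,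
          f (u.1.1, u.2.1) (u.1.2, u.2.2)
      = ∑ x ∈ D.sigma (fun t => Finset.HasAntidiagonal.antidiagonal t.1 ×ˢ Finset.HasAntidiagonal.antidiagonal t.2),
          f (x.2.1.1, x.2.2.1) (x.2.1.2, x.2.2.2) := by
        rw [Finset.sum_sigma]
    _ = ∑ x ∈ (D ×ˢ D).filter
          (fun x : (ℕ×ℕ)×(ℕ×ℕ) => x.1.1 + x.2.1 < 2*B ∧ x.1.2 + x.2.2 < 2*B), f x.1 x.2 := by
        apply Finset.sum_nbij' (i := fun x : Σ _t : ℕ×ℕ, (ℕ×ℕ)×(ℕ×ℕ) =>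
            ((x.2.1.1, x.2.2.1), (x.2.1.2, x.2.2.2)))
          (j := fun x : (ℕ×ℕ)×(ℕ×ℕ) =>
            ⟨(x.1.1 + x.2.1, x.1.2 + x.2.2), ((x.1.1, x.2.1), (x.1.2, x.2.2))⟩)
        · rintro ⟨⟨t1, t2⟩, ⟨⟨a1, b1⟩, ⟨a2, b2⟩⟩⟩ hx
          simp [hD] at hx ⊢
          omega
        · rintro ⟨⟨p1, p2⟩, ⟨s1, s2⟩⟩ hx
          simp [hD] at hx ⊢
          omega
        · rintro ⟨⟨t1, t2⟩, ⟨⟨a1, b1⟩, ⟨a2, b2⟩⟩⟩ hx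
          simp [hD] at hx ⊢
          omega
        · rintro ⟨⟨p1, p2⟩, ⟨s1, s2⟩⟩ _
          rfl
        · rintro ⟨⟨t1, t2⟩, ⟨⟨a1, b1⟩, ⟨a2, b2⟩⟩⟩ _
          rfl
    _ = ∑ x ∈ D ×ˢ D, f x.1 x.2 := hR
    _ = ∑ p ∈ D, ∑ s ∈ D, f p s := by rw [Finset.sum_product]

/-- Convolution of a two-variable power series against a coefficient family. -/
def conv2 (q : MvPowerSeries (Fin 2) ℂ) (c : ℤ × ℤ → W) (m n : ℤ) : W :=
  ∑ᶠ ij : ℕ × ℕ, MvPowerSeries.coeff (R := ℂ) (epair ij) q • c (m - ij.1, n - ij.2)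

/-- The coefficient family has, at each point, finitely many relevant lower shifts. -/
def Fin2Supp (c : ℤ × ℤ → W) : Prop :=
  ∀ m n : ℤ, (Function.support fun ij : ℕ × ℕ => c (m - ij.1, n - ij.2)).Finite

omit [Module ℂ W] in
lemma hahn_bound (x : HahnSeries ℤ W) : ∃ N : ℤ, ∀ n < N, x.coeff n = 0 := by
  rcases eq_or_ne x 0 with rfl | hx
  · exact ⟨0, fun n _ => rfl⟩
  · exact ⟨x.order, fun n hn => HahnSeries.coeff_eq_zero_of_lt_order hn⟩

lemma fin2_cFun (a b : W →ₗ[ℂ] HahnSeries ℤ W) (w : W) :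
    Fin2Supp (fun p : ℤ × ℤ => (a ((b w).coeff p.2)).coeff p.1) := by
  intro m n
  obtain ⟨Nb, hNb⟩ := hahn_bound (b w)
  choose A hA using fun j : ℕ => hahn_bound (a ((b w).coeff (n - j)))
  set R : ℕ := (n - Nb).toNat with hR
  set K : ℕ := (Finset.range (R + 1)).sup (fun j => (m - A j).toNat) with hK
  apply Set.Finite.subset (Finset.range (K+1) ×ˢ Finset.range (R+1) : Finset (ℕ×ℕ)).finite_toSet
  rintro ⟨i, j⟩ hij
  simp only [Function.mem_support] at hij
  have hj : (j : ℤ) ≤ n - Nb := by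
    by_contra hc
    exact hij (by rw [hNb (n - j) (by omega)]; simp)
  have hi : A j ≤ m - i := by
    by_contra hc
    exact hij (hA j (m - i) (by omega))
  have hjR : j ∈ Finset.range (R + 1) := Finset.mem_range.2 (by omega)
  have hiK : (m - A j).toNat ≤ K := Finset.le_sup (f := fun j => (m - A j).toNat) hjR
  simp only [Finset.coe_product, Set.mem_prod, Finset.mem_coe, Finset.mem_range]
  omega

lemma fin2_cFun' (a b : W →ₗ[ℂ] HahnSeries ℤ W) (w : W) :
    Fin2Supp (fun p : ℤ × ℤ => (b ((a w).coeff p.1)).coeff p.2) := by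
  intro m n
  obtain ⟨Na, hNa⟩ := hahn_bound (a w)
  choose A hA using fun i : ℕ => hahn_bound (b ((a w).coeff (m - i)))
  set R : ℕ := (m - Na).toNat with hR
  set K : ℕ := (Finset.range (R + 1)).sup (fun i => (n - A i).toNat) with hK
  apply Set.Finite.subset (Finset.range (R+1) ×ˢ Finset.range (K+1) : Finset (ℕ×ℕ)).finite_toSet
  rintro ⟨i, j⟩ hij
  simp only [Function.mem_support] at hij
  have hj : (i : ℤ) ≤ m - Na := by
    by_contra hc
    exact hij (by rw [hNa (m - i) (by omega)]; simp)
  have hi : A i ≤ n - j := by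
    by_contra hc
    exact hij (hA i (n - j) (by omega))
  have hjR : i ∈ Finset.range (R + 1) := Finset.mem_range.2 (by omega)
  have hiK : (n - A i).toNat ≤ K := Finset.le_sup (f := fun i => (n - A i).toNat) hjR
  simp only [Finset.coe_product, Set.mem_prod, Finset.mem_coe, Finset.mem_range]
  omega

lemma conv2_mul (q r : MvPowerSeries (Fin 2) ℂ) (c : ℤ × ℤ → W) (hc : Fin2Supp c) (m n : ℤ) :
    conv2 (q * r) c m n =
      ∑ᶠ ij : ℕ × ℕ, MvPowerSeries.coeff (R := ℂ) (epair ij) q • conv2 r c (m - ij.1) (n - ij.2) := by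
  classical
  set S := (hc m n).toFinset with hS
  set B : ℕ := S.sup (fun ij => max ij.1 ij.2) + 1 with hBdef
  have hB : ∀ i j : ℕ, c (m - i, n - j) ≠ 0 → i < B ∧ j < B := by
    intro i j hij
    have hmem : (i, j) ∈ S := (hc m n).mem_toFinset.2 hij
    have h1 := Finset.le_sup (f := fun ij : ℕ × ℕ => max ij.1 ij.2) hmem
    simp only [le_max_iff, max_le_iff] at h1
    omega
  set D := Finset.range (2*B) ×ˢ Finset.range (2*B) with hD
  have hDmem : ∀ t : ℕ × ℕ, t ∈ D ↔ t.1 < 2*B ∧ t.2 < 2*B := by intro t; simp [hD]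
  have hL : conv2 (q * r) c m n
      = ∑ t ∈ D, MvPowerSeries.coeff (R := ℂ) (epair t) (q * r) • c (m - t.1, n - t.2) := by
    apply finsum_eq_sum_of_support_subset
    rintro ⟨i, j⟩ hij
    simp only [Function.mem_support] at hij
    have : c (m - i, n - j) ≠ 0 := fun h => hij (by rw [h, smul_zero])
    have := hB i j this
    rw [Finset.mem_coe, hDmem]
    constructor <;> omega
  have hInner : ∀ i j : ℕ, conv2 r c (m - i) (n - j)
      = ∑ s ∈ D, MvPowerSeries.coeff (R := ℂ) (epair s) r • c (m - i - s.1, n - j - s.2) := by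
    intro i j
    apply finsum_eq_sum_of_support_subset
    rintro ⟨s1, s2⟩ hs
    simp only [Function.mem_support] at hs
    have hcs : c (m - i - s1, n - j - s2) ≠ 0 := fun h => hs (by rw [h, smul_zero])
    have hcs' : c (m - (i + s1 : ℕ), n - (j + s2 : ℕ)) ≠ 0 := by
      convert hcs using 3 <;> push_cast <;> ring
    have := hB _ _ hcs'
    rw [Finset.mem_coe, hDmem]
    constructor <;> omega
  have hR : (∑ᶠ ij : ℕ × ℕ, MvPowerSeries.coeff (R := ℂ) (epair ij) q • conv2 r c (m - ij.1) (n - ij.2))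
      = ∑ p ∈ D, MvPowerSeries.coeff (R := ℂ) (epair p) q • conv2 r c (m - p.1) (n - p.2) := by
    apply finsum_eq_sum_of_support_subset
    rintro ⟨i, j⟩ hij
    simp only [Function.mem_support] at hij
    have hconv : conv2 r c (m - i) (n - j) ≠ 0 := fun h => hij (by rw [h, smul_zero])
    rw [hInner i j] at hconv
    obtain ⟨s, _, hsne⟩ := Finset.exists_ne_zero_of_sum_ne_zero hconv
    have hcs : c (m - i - s.1, n - j - s.2) ≠ 0 := fun h => hsne (by rw [h, smul_zero])
    have hcs' : c (m - (i + s.1 : ℕ), n - (j + s.2 : ℕ)) ≠ 0 := by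
      convert hcs using 3 <;> push_cast <;> ring
    have := hB _ _ hcs'
    rw [Finset.mem_coe, hDmem]
    constructor <;> omega
  rw [hL, hR]
  have hf0 : ∀ p s : ℕ × ℕ, B ≤ p.1 + s.1 ∨ B ≤ p.2 + s.2 →
      (MvPowerSeries.coeff (R := ℂ) (epair p) q * MvPowerSeries.coeff (R := ℂ) (epair s) r)
        • c (m - p.1 - s.1, n - p.2 - s.2) = 0 := by
    intro p s hps
    have hzero : c (m - p.1 - s.1, n - p.2 - s.2) = 0 := by
      by_contra hcne
      have hcs' : c (m - (p.1 + s.1 : ℕ), n - (p.2 + s.2 : ℕ)) ≠ 0 := by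
        convert hcne using 3 <;> push_cast <;> ring
      have := hB _ _ hcs'
      omega
    rw [hzero, smul_zero]
  have hks := key_sum B (fun p s =>
    (MvPowerSeries.coeff (R := ℂ) (epair p) q * MvPowerSeries.coeff (R := ℂ) (epair s) r)
      • c (m - p.1 - s.1, n - p.2 - s.2)) hf0
  calc ∑ t ∈ D, MvPowerSeries.coeff (R := ℂ) (epair t) (q * r) • c (m - t.1, n - t.2)
      = ∑ t ∈ D, ∑ u ∈ Finset.HasAntidiagonal.antidiagonal t.1 ×ˢ Finset.HasAntidiagonal.antidiagonal t.2,
          (MvPowerSeries.coeff (R := ℂ) (epair (u.1.1, u.2.1)) q *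
            MvPowerSeries.coeff (R := ℂ) (epair (u.1.2, u.2.2)) r) • c (m - t.1, n - t.2) := by
        refine Finset.sum_congr rfl fun t _ => ?_
        rw [coeff_mul_epair, Finset.sum_smul]
    _ = ∑ t ∈ D, ∑ u ∈ Finset.HasAntidiagonal.antidiagonal t.1 ×ˢ Finset.HasAntidiagonal.antidiagonal t.2,
          (MvPowerSeries.coeff (R := ℂ) (epair (u.1.1, u.2.1)) q *
            MvPowerSeries.coeff (R := ℂ) (epair (u.1.2, u.2.2)) r)
            • c (m - (u.1.1 : ℕ) - (u.1.2 : ℕ), n - (u.2.1 : ℕ) - (u.2.2 : ℕ)) := by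
        refine Finset.sum_congr rfl fun t ht => Finset.sum_congr rfl fun u hu => ?_
        simp only [Finset.mem_product, Finset.HasAntidiagonal.mem_antidiagonal] at hu
        have h1 : m - (t.1 : ℤ) = m - u.1.1 - u.1.2 := by rw [← hu.1]; push_cast; ring
        have h2 : n - (t.2 : ℤ) = n - u.2.1 - u.2.2 := by rw [← hu.2]; push_cast; ring
        rw [h1, h2]
    _ = ∑ p ∈ D, ∑ s ∈ D,
          (MvPowerSeries.coeff (R := ℂ) (epair p) q * MvPowerSeries.coeff (R := ℂ) (epair s) r)
            • c (m - p.1 - s.1, n - p.2 - s.2) := hks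
    _ = ∑ p ∈ D, MvPowerSeries.coeff (R := ℂ) (epair p) q • conv2 r c (m - p.1) (n - p.2) := by
        refine Finset.sum_congr rfl fun p _ => ?_
        rw [hInner p.1 p.2, Finset.smul_sum]
        exact Finset.sum_congr rfl fun s _ => (smul_smul _ _ _).symm

lemma prodCoeff_eq_conv2 (q : MvPowerSeries (Fin 2) ℂ) (a b : W →ₗ[ℂ] HahnSeries ℤ W) (w : W)
    (m n : ℤ) :
    prodCoeff q a b w m n
      = conv2 q (fun p : ℤ × ℤ => (a ((b w).coeff p.2)).coeff p.1) m n := rfl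

lemma prodCoeff'_eq_conv2 (q : MvPowerSeries (Fin 2) ℂ) (a b : W →ₗ[ℂ] HahnSeries ℤ W) (w : W)
    (m n : ℤ) :
    prodCoeff' q a b w m n
      = conv2 q (fun p : ℤ × ℤ => (b ((a w).coeff p.1)).coeff p.2) m n := rfl

lemma prodCoeff_mul (q r : MvPowerSeries (Fin 2) ℂ) (a b : W →ₗ[ℂ] HahnSeries ℤ W) (w : W)
    (m n : ℤ) :
    prodCoeff (r * q) a b w m n =
      ∑ᶠ ij : ℕ × ℕ, MvPowerSeries.coeff (R := ℂ) (epair ij) r • prodCoeff q a b w (m - ij.1) (n - ij.2) := by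
  rw [prodCoeff_eq_conv2, conv2_mul r q _ (fin2_cFun a b w)]
  exact finsum_congr fun ij => by rw [prodCoeff_eq_conv2]

lemma prodCoeff'_mul (q r : MvPowerSeries (Fin 2) ℂ) (a b : W →ₗ[ℂ] HahnSeries ℤ W) (w : W)
    (m n : ℤ) :
    prodCoeff' (r * q) a b w m n =
      ∑ᶠ ij : ℕ × ℕ, MvPowerSeries.coeff (R := ℂ) (epair ij) r • prodCoeff' q a b w (m - ij.1) (n - ij.2) := by
  rw [prodCoeff'_eq_conv2, conv2_mul r q _ (fin2_cFun' a b w)]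
  exact finsum_congr fun ij => by rw [prodCoeff'_eq_conv2]

lemma memHom2_mul (q r : MvPowerSeries (Fin 2) ℂ) (a b : W →ₗ[ℂ] HahnSeries ℤ W)
    (h : MemHom2 q a b) : MemHom2 (r * q) a b := by
  intro w
  obtain ⟨N, hN⟩ := h w
  refine ⟨N, fun m n hmn => ?_⟩
  rw [prodCoeff_mul]
  apply finsum_eq_zero_of_forall_eq_zero
  rintro ⟨i, j⟩
  rw [hN (m - i) (n - j) (by rcases hmn with h' | h'; exacts [Or.inl (by omega), Or.inr (by omega)]),
    smul_zero]

lemma prodEq_mul (q r : MvPowerSeries (Fin 2) ℂ) (a b : W →ₗ[ℂ] HahnSeries ℤ W)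
    (h : ∀ (w : W) (m n : ℤ), prodCoeff q a b w m n = prodCoeff' q a b w m n) :
    ∀ (w : W) (m n : ℤ), prodCoeff (r * q) a b w m n = prodCoeff' (r * q) a b w m n := by
  intro w m n
  rw [prodCoeff_mul, prodCoeff'_mul]
  exact finsum_congr fun ij => by rw [h w]

/-- The complementary factor in `g(x₁) - g(x₂) = (x₁ - x₂)·h`. -/
def hser (g : PowerSeries ℂ) : MvPowerSeries (Fin 2) ℂ :=
  mvmk fun d => PowerSeries.coeff (R := ℂ) (d 0 + d 1 + 1) g

lemma eq_single0 (d : Fin 2 →₀ ℕ) : d = Finsupp.single 0 (d 0) ↔ d 1 = 0 := by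
  constructor
  · intro h
    conv_lhs => rw [h]
    simp [Finsupp.single_apply]
  · intro h
    ext x
    fin_cases x <;> simp [Finsupp.single_apply, h]

lemma eq_single1 (d : Fin 2 →₀ ℕ) : d = Finsupp.single 1 (d 1) ↔ d 0 = 0 := by
  constructor
  · intro h
    conv_lhs => rw [h]
    simp [Finsupp.single_apply]
  · intro h
    ext x
    fin_cases x <;> simp [Finsupp.single_apply, h]

lemma factor (g : PowerSeries ℂ) (hg0 : PowerSeries.constantCoeff (R := ℂ) g = 0) :
    toMv 0 g - toMv 1 g = (MvPowerSeries.X 0 - MvPowerSeries.X 1) * hser g := by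
  apply MvPowerSeries.ext
  intro d
  rw [sub_mul, map_sub, map_sub, MvPowerSeries.X_def, MvPowerSeries.X_def,
    MvPowerSeries.coeff_monomial_mul, MvPowerSeries.coeff_monomial_mul]
  have hc0 : MvPowerSeries.coeff (R := ℂ) d (toMv 0 g)
      = if d = Finsupp.single 0 (d 0) then PowerSeries.coeff (R := ℂ) (d 0) g else 0 := rfl
  have hc1 : MvPowerSeries.coeff (R := ℂ) d (toMv 1 g)
      = if d = Finsupp.single 1 (d 1) then PowerSeries.coeff (R := ℂ) (d 1) g else 0 := rfl
  have hh : ∀ e : Fin 2 →₀ ℕ, MvPowerSeries.coeff (R := ℂ) e (hser g)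
      = PowerSeries.coeff (R := ℂ) (e 0 + e 1 + 1) g := fun _ => rfl
  rw [hc0, hc1]
  have hs0 : ((d - Finsupp.single 0 1 : Fin 2 →₀ ℕ) 0) = d 0 - 1 := by
    rw [Finsupp.tsub_apply]; simp
  have hs0' : ((d - Finsupp.single 0 1 : Fin 2 →₀ ℕ) 1) = d 1 := by
    rw [Finsupp.tsub_apply]; simp [Finsupp.single_apply]
  have hs1 : ((d - Finsupp.single 1 1 : Fin 2 →₀ ℕ) 0) = d 0 := by
    rw [Finsupp.tsub_apply]; simp [Finsupp.single_apply]
  have hs1' : ((d - Finsupp.single 1 1 : Fin 2 →₀ ℕ) 1) = d 1 - 1 := by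
    rw [Finsupp.tsub_apply]; simp
  simp only [Finsupp.single_le_iff, eq_single0, eq_single1, hh, hs0, hs0', hs1, hs1', one_mul]
  have hg0' : PowerSeries.coeff (R := ℂ) 0 g = 0 := by
    rwa [PowerSeries.coeff_zero_eq_constantCoeff]
  by_cases h0 : d 0 = 0 <;> by_cases h1 : d 1 = 0
  · simp [h0, h1, hg0']
  · have e2 : d 0 + (d 1 - 1) + 1 = d 1 := by omega
    simp [h0, h1, Nat.one_le_iff_ne_zero, e2]
  · have e1 : d 0 - 1 + d 1 + 1 = d 0 := by omega
    simp [h0, h1, Nat.one_le_iff_ne_zero, e1]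
  · have e1 : d 0 - 1 + d 1 + 1 = d 0 + d 1 := by omega
    have e2 : d 0 + (d 1 - 1) + 1 = d 0 + d 1 := by omega
    simp [h0, h1, Nat.one_le_iff_ne_zero, e1, e2]

end Stmt14Aux

namespace VFA


-- STATEMENT 14
theorem statement14 {W : Type*} [AddCommGroup W] [Module ℂ W]
    (a b : W →ₗ[ℂ] HahnSeries ℤ W) (g : PowerSeries ℂ)
    (hg0 : PowerSeries.constantCoeff (R := ℂ) g = 0) (hg1 : PowerSeries.coeff (R := ℂ) 1 g ≠ 0) (k : ℕ) :
    (MemHom2 ((toMv 0 g - toMv 1 g) ^ k) a b ↔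
      MemHom2 ((MvPowerSeries.X 0 - MvPowerSeries.X 1 : MvPowerSeries (Fin 2) ℂ) ^ k) a b) ∧
    ((∀ (w : W) (m n : ℤ), prodCoeff ((toMv 0 g - toMv 1 g) ^ k) a b w m n =
        prodCoeff' ((toMv 0 g - toMv 1 g) ^ k) a b w m n) ↔
      (∀ (w : W) (m n : ℤ),
        prodCoeff ((MvPowerSeries.X 0 - MvPowerSeries.X 1 : MvPowerSeries (Fin 2) ℂ) ^ k) a b w m n =
        prodCoeff' ((MvPowerSeries.X 0 - MvPowerSeries.X 1 : MvPowerSeries (Fin 2) ℂ) ^ k) a b w m n)) := by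
  classical
  set h : MvPowerSeries (Fin 2) ℂ := hser g with hh
  have hfact : toMv 0 g - toMv 1 g = (MvPowerSeries.X 0 - MvPowerSeries.X 1) * h :=
    factor g hg0
  have hcc : MvPowerSeries.constantCoeff (σ := Fin 2) (R := ℂ) h = PowerSeries.coeff (R := ℂ) 1 g := rfl
  set u : ℂˣ := Units.mk0 _ hg1 with hu
  set h' : MvPowerSeries (Fin 2) ℂ := MvPowerSeries.invOfUnit h u with hh'
  have hmul : h * h' = 1 := MvPowerSeries.mul_invOfUnit h u (by rw [hcc]; rfl)
  have eq1 : (toMv 0 g - toMv 1 g) ^ k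
      = h ^ k * (MvPowerSeries.X 0 - MvPowerSeries.X 1 : MvPowerSeries (Fin 2) ℂ) ^ k := by
    rw [hfact, mul_pow, mul_comm]
  have eq2 : (MvPowerSeries.X 0 - MvPowerSeries.X 1 : MvPowerSeries (Fin 2) ℂ) ^ k
      = h' ^ k * (toMv 0 g - toMv 1 g) ^ k := by
    rw [eq1, ← mul_assoc, ← mul_pow, mul_comm h' h, hmul, one_pow, one_mul]
  constructor
  · constructor
    · intro H
      rw [eq2]
      exact memHom2_mul _ _ a b H
    · intro H
      rw [eq1]
      exact memHom2_mul _ _ a b H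
  · constructor
    · intro H w m n
      rw [eq2]
      exact prodEq_mul _ _ a b H w m n
    · intro H w m n
      rw [eq1]
      exact prodEq_mul _ _ a b H w m n


end VFA
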